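/- Let E be the 2-degenerate 3-computad with 2-cells {x,y} and no 3-cells, A the one with 2-cells {a₁,a₂,a₃} and one 3-cell f : a₁·a₂ → a₃, and α₁, α₂ : E → A the morphisms with α₁(x)=a₁, α₂(x)=a₂, α₁(y)=α₂(y)=a₃. Then the coequalizer C of α₁ and α₂ has exactly two 2-cells ā, a₃ and exactly one 3-cell f̄ : ā·ā → a₃. -/
import Mathlib


open CategoryTheory

/-- A 2-degenerate 3-computad: a single 0-cell, no 1-cells, so the data is a set of
2-cells, a set of 3-cells, and boundary maps into the free commutative monoid
(multisets) on the 2-cells. -/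
structure DegComputad where
  C2 : Type
  C3 : Type
  src : C3 → Multiset C2
  tgt : C3 → Multiset C2

/-- Morphisms of 2-degenerate 3-computads. -/
@[ext]
structure DegComputad.Hom (A B : DegComputad) where
  f2 : A.C2 → B.C2
  f3 : A.C3 → B.C3
  src_comm : ∀ e, B.src (f3 e) = Multiset.map f2 (A.src e)
  tgt_comm : ∀ e, B.tgt (f3 e) = Multiset.map f2 (A.tgt e)

instance : Category DegComputad where
  Hom := DegComputad.Hom
  id A := ⟨id, id, by simp, by simp⟩
  comp f g := ⟨g.f2 ∘ f.f2, g.f3 ∘ f.f3,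
    by intro e; simp [f.src_comm, g.src_comm, Multiset.map_map],
    by intro e; simp [f.tgt_comm, g.tgt_comm, Multiset.map_map]⟩

@[simp] lemma DegComputad.id_f2 (A : DegComputad) : (𝟙 A : A ⟶ A).f2 = id := rfl
@[simp] lemma DegComputad.id_f3 (A : DegComputad) : (𝟙 A : A ⟶ A).f3 = id := rfl
@[simp] lemma DegComputad.comp_f2 {A B C : DegComputad} (f : A ⟶ B) (g : B ⟶ C) :
    (f ≫ g).f2 = g.f2 ∘ f.f2 := rfl
@[simp] lemma DegComputad.comp_f3 {A B C : DegComputad} (f : A ⟶ B) (g : B ⟶ C) :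
    (f ≫ g).f3 = g.f3 ∘ f.f3 := rfl
/-- The computad `A`: 2-cells `a₁,a₂,a₃` (as `0,1,2`), one 3-cell `f : a₁·a₂ → a₃`. -/
abbrev CompA : DegComputad := ⟨Fin 3, Unit, fun _ => {0, 1}, fun _ => {2}⟩

/-- The computad `B`: an isomorphic copy of `A`, with 2-cells `b₁,b₂,b₃` and
one 3-cell `g : b₁·b₂ → b₃`. -/
abbrev CompB : DegComputad := ⟨Fin 3, Unit, fun _ => {0, 1}, fun _ => {2}⟩

/-- The putative product `A × B`: nine 2-cells `(aᵢ,bⱼ)` and two 3-cells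
`(f,g)₁ : (a₁,b₁)·(a₂,b₂) → (a₃,b₃)` and `(f,g)₂ : (a₂,b₁)·(a₁,b₂) → (a₃,b₃)`. -/
abbrev CompAB : DegComputad :=
  ⟨Fin 3 × Fin 3, Fin 2,
   fun e => if e = 0 then {((0 : Fin 3), (0 : Fin 3)), (1, 1)} else {(1, 0), (0, 1)},
   fun _ => {(2, 2)}⟩

/-- First projection `A × B ⟶ A`. -/
def projA : CompAB ⟶ CompA :=
  ⟨Prod.fst, fun _ => (), by decide, by decide⟩

/-- Second projection `A × B ⟶ B`. -/
def projB : CompAB ⟶ CompB :=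
  ⟨Prod.snd, fun _ => (), by decide, by decide⟩

/-- The computad `E`: two 2-cells `x,y` (as `0,1`) and no 3-cells. -/
abbrev CompE : DegComputad := ⟨Fin 2, Empty, fun e => e.elim, fun e => e.elim⟩

/-- The morphism `α₁ : E ⟶ A`, `x ↦ a₁`, `y ↦ a₃`. -/
def alpha1 : CompE ⟶ CompA := ⟨![0, 2], fun e => e.elim, fun e => e.elim, fun e => e.elim⟩

/-- The morphism `α₂ : E ⟶ A`, `x ↦ a₂`, `y ↦ a₃`. -/
def alpha2 : CompE ⟶ CompA := ⟨![1, 2], fun e => e.elim, fun e => e.elim, fun e => e.elim⟩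

/-- The coequalizer `C` of `α₁, α₂`: two 2-cells `ā, a₃` (as `0,1`) and one 3-cell
`f̄ : ā·ā → a₃`. -/
abbrev CompC : DegComputad := ⟨Fin 2, Unit, fun _ => {0, 0}, fun _ => {1}⟩

/-- The quotient morphism `A ⟶ C`, identifying `a₁` and `a₂`. -/
def qmap : CompA ⟶ CompC := ⟨![0, 0, 1], fun _ => (), by decide, by decide⟩

open CategoryTheory.Limits

lemma fin2_ext {X : Type} {f g : Fin 2 → X} (h0 : f 0 = g 0) (h1 : f 1 = g 1) : f = g := by
  funext e; fin_cases e <;> assumption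

lemma fin3_ext {X : Type} {f g : Fin 3 → X} (h0 : f 0 = g 0) (h1 : f 1 = g 1)
    (h2 : f 2 = g 2) : f = g := by
  funext e; fin_cases e <;> assumption

/-- The coequalizer of `α₁, α₂ : E ⟶ A` is the computad `C` with exactly two 2-cells
`ā, a₃` and exactly one 3-cell `f̄ : ā·ā → a₃`, via the quotient map identifying
`a₁` with `a₂`. -/
theorem stmt6 : ∃ w : alpha1 ≫ qmap = alpha2 ≫ qmap,
    Nonempty (IsColimit (Cofork.ofπ qmap w)) := by
  refine ⟨by apply DegComputad.Hom.ext <;> funext e <;> fin_cases e <;> rfl, ?_⟩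
  refine ⟨Cofork.IsColimit.mk _ (fun s => ?_) (fun s => ?_) (fun s m hm => ?_)⟩
  · -- construct the descended morphism
    let p : CompA ⟶ s.pt := s.π
    have h01 : p.f2 0 = p.f2 1 := by
      have h := congrArg DegComputad.Hom.f2 s.condition
      exact congrFun h 0
    exact
      { f2 := ![p.f2 0, p.f2 2]
        f3 := fun _ => p.f3 ()
        src_comm := by
          intro e
          have h := p.src_comm ()
          show s.pt.src (p.f3 ()) = _
          rw [h]
          show Multiset.map p.f2 {0, 1} = Multiset.map ![p.f2 0, p.f2 2] {0, 0}
          simp [h01]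
        tgt_comm := by
          intro e
          have h := p.tgt_comm ()
          show s.pt.tgt (p.f3 ()) = _
          rw [h]
          rfl }
  · -- factorization
    have h01 := congrFun (congrArg DegComputad.Hom.f2 s.condition) 0
    apply DegComputad.Hom.ext
    · exact fin3_ext rfl h01 rfl
    · funext e; rfl
  · -- uniqueness
    have h2 := congrArg DegComputad.Hom.f2 hm
    have h3 := congrArg DegComputad.Hom.f3 hm
    apply DegComputad.Hom.ext
    · exact fin2_ext (congrFun h2 ((0:Fin 3) : CompA.C2)) (congrFun h2 ((2:Fin 3) : CompA.C2))
    · funext e; exact congrFun h3 e
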